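/- Generating function for binomial-type sequences (fundamental theorem of finite difference calculus), Abel case: Σ_{n=0}^{∞} A_n(x;b) t^n/n! = exp(x·g(t)) as formal power series in t, where A_n(x;b)=x(x−nb)^{n−1} (A_0=1) and g(t) is the compositional inverse of the delta series f(t) = t·e^{bt}, i.e. g satisfies g(t)e^{b·g(t)} = t. -/

import Mathlib

open Polynomial Finset PowerSeries

noncomputable def Eg (g : PowerSeries ℝ) (c : ℝ) : PowerSeries ℝ :=
  PowerSeries.mk (fun n => ∑ k ∈ Finset.range (n + 1),
    c ^ k / (k.factorial : ℝ) * PowerSeries.coeff n (g ^ k))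

lemma gpow_eq_zero {g : PowerSeries ℝ} (hg0 : PowerSeries.constantCoeff g = 0)
    {n m : ℕ} (h : n < m) : PowerSeries.coeff n (g ^ m) = 0 := by
  have hd : (PowerSeries.X : PowerSeries ℝ) ^ m ∣ g ^ m :=
    pow_dvd_pow_of_dvd (PowerSeries.X_dvd_iff.2 hg0) m
  exact PowerSeries.X_pow_dvd_iff.1 hd n h

lemma tri (N : ℕ) (F : ℕ → ℕ → ℝ) :
    ∑ s ∈ range (N + 1), ∑ k ∈ range (s + 1), F k (s - k) =
      ∑ k ∈ range (N + 1), ∑ l ∈ range (N + 1 - k), F k l := by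
  induction N with
  | zero => simp
  | succ N ih =>
      rw [Finset.sum_range_succ, ih]
      have h2 : ∑ k ∈ range (N + 2), ∑ l ∈ range (N + 2 - k), F k l
          = ∑ k ∈ range (N + 1), ((∑ l ∈ range (N + 1 - k), F k l) + F k (N + 1 - k))
            + F (N + 1) 0 := by
        rw [Finset.sum_range_succ]
        congr 1
        · apply Finset.sum_congr rfl
          intro k hk
          have hk' : k ≤ N := Nat.lt_succ_iff.1 (Finset.mem_range.1 hk)
          have : N + 2 - k = (N + 1 - k) + 1 := by omega
          rw [this, Finset.sum_range_succ]
        · simp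
      rw [h2, Finset.sum_add_distrib]
      have h3 : ∑ k ∈ range (N + 1 + 1), F k (N + 1 - k)
          = (∑ k ∈ range (N + 1), F k (N + 1 - k)) + F (N + 1) 0 := by
        rw [Finset.sum_range_succ]; simp
      rw [h3]; ring

lemma choose_cast_eq (s k : ℕ) (hk : k ≤ s) :
    ((s.choose k : ℝ)) = (s.factorial : ℝ) / ((k.factorial : ℝ) * ((s - k).factorial : ℝ)) := by
  rw [eq_div_iff (by positivity)]
  rw [← mul_assoc]
  exact_mod_cast Nat.choose_mul_factorial_mul_factorial hk

lemma coeff_pow_split {g : PowerSeries ℝ} (n k l : ℕ) :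
    PowerSeries.coeff n (g ^ (k + l)) =
      ∑ x ∈ range (n + 1),
        PowerSeries.coeff x (g ^ k) * PowerSeries.coeff (n - x) (g ^ l) := by
  rw [pow_add, PowerSeries.coeff_mul, Finset.Nat.sum_antidiagonal_eq_sum_range_succ_mk]

lemma Eg_mul {g : PowerSeries ℝ} (hg0 : PowerSeries.constantCoeff g = 0) (c d : ℝ) :
    Eg g c * Eg g d = Eg g (c + d) := by
  ext n
  set a : ℕ → ℕ → ℝ := fun i k => PowerSeries.coeff i (g ^ k) with ha
  set T : ℕ → ℕ → ℕ → ℝ := fun x k l =>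
    c ^ k / (k.factorial : ℝ) * a x k * (d ^ l / (l.factorial : ℝ) * a (n - x) l) with hT
  have hvan1 : ∀ i k, i < k → a i k = 0 := fun i k h => gpow_eq_zero hg0 h
  -- LHS
  have lhs_eq : PowerSeries.coeff n (Eg g c * Eg g d)
      = ∑ x ∈ range (n + 1), ∑ k ∈ range (x + 1), ∑ l ∈ range (n - x + 1), T x k l := by
    rw [PowerSeries.coeff_mul, Finset.Nat.sum_antidiagonal_eq_sum_range_succ_mk]
    apply Finset.sum_congr rfl
    intro x hx
    simp only [Eg, PowerSeries.coeff_mk]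
    rw [Finset.sum_mul_sum]
  -- square sum
  have square : ∀ x ∈ range (n + 1),
      ∑ k ∈ range (x + 1), ∑ l ∈ range (n - x + 1), T x k l
        = ∑ k ∈ range (n + 1), ∑ l ∈ range (n + 1), T x k l := by
    intro x hx
    have hxn : x ≤ n := Nat.lt_succ_iff.1 (Finset.mem_range.1 hx)
    rw [Finset.sum_subset (Finset.range_subset_range.2 (by omega : x + 1 ≤ n + 1))]
    · apply Finset.sum_congr rfl
      intro k hk
      rcases le_or_gt k x with hkx | hkx
      · rw [Finset.sum_subset (Finset.range_subset_range.2 (by omega : n - x + 1 ≤ n + 1))]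
        intro l _ hl
        have : n - x < l := by simp at hl; omega
        simp [hT, hvan1 _ _ this]
      · -- k > x : both inner sums are zero
        have h0 : a x k = 0 := hvan1 _ _ hkx
        rw [Finset.sum_eq_zero, Finset.sum_eq_zero] <;> intro l _ <;> simp [hT, h0]
    · intro k hk hk'
      have hxk : x < k := by simp at hk'; omega
      apply Finset.sum_eq_zero
      intro l _
      simp [hT, hvan1 _ _ hxk]
  -- triangle = square
  have triangle_sq : ∀ x ∈ range (n + 1),
      ∑ k ∈ range (n + 1), ∑ l ∈ range (n + 1 - k), T x k l
        = ∑ k ∈ range (n + 1), ∑ l ∈ range (n + 1), T x k l := by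
    intro x hx
    have hxn : x ≤ n := Nat.lt_succ_iff.1 (Finset.mem_range.1 hx)
    apply Finset.sum_congr rfl
    intro k hk
    have hkn : k ≤ n := Nat.lt_succ_iff.1 (Finset.mem_range.1 hk)
    rw [Finset.sum_subset (Finset.range_subset_range.2 (by omega : n + 1 - k ≤ n + 1))]
    intro l hl hl'
    have hkl : n < k + l := by simp at hl'; omega
    -- either k > x or l > n - x
    rcases le_or_gt k x with hkx | hkx
    · have : n - x < l := by omega
      simp [hT, hvan1 _ _ this]
    · simp [hT, hvan1 _ _ hkx]
  -- RHS
  have rhs_eq : PowerSeries.coeff n (Eg g (c + d))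
      = ∑ x ∈ range (n + 1), ∑ s ∈ range (n + 1), ∑ k ∈ range (s + 1), T x k (s - k) := by
    simp only [Eg, PowerSeries.coeff_mk]
    rw [Finset.sum_comm]
    apply Finset.sum_congr rfl
    intro s hs
    have step1 : (c + d) ^ s / (s.factorial : ℝ) * a n s
        = ∑ k ∈ range (s + 1),
            c ^ k / (k.factorial : ℝ) * (d ^ (s - k) / ((s - k).factorial : ℝ)) * a n s := by
      rw [add_pow, Finset.sum_div, Finset.sum_mul]
      apply Finset.sum_congr rfl
      intro k hk
      have hks : k ≤ s := Nat.lt_succ_iff.1 (Finset.mem_range.1 hk)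
      rw [choose_cast_eq s k hks]
      field_simp
    rw [step1, Finset.sum_comm]
    apply Finset.sum_congr rfl
    intro k hk
    have hks : k ≤ s := Nat.lt_succ_iff.1 (Finset.mem_range.1 hk)
    have : a n s = ∑ x ∈ range (n + 1), a x k * a (n - x) (s - k) := by
      have := coeff_pow_split (g := g) n k (s - k)
      rwa [Nat.add_sub_cancel' hks] at this
    rw [this, Finset.mul_sum]
    apply Finset.sum_congr rfl
    intro x hx
    simp only [hT]
    ring
  rw [lhs_eq, rhs_eq]
  rw [Finset.sum_congr rfl square]
  apply Finset.sum_congr rfl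
  intro x hx
  rw [tri n (fun k l => T x k l)]
  exact (triangle_sq x hx).symm

lemma Eg_zero (g : PowerSeries ℝ) : Eg g 0 = 1 := by
  ext n
  simp only [Eg, PowerSeries.coeff_mk]
  rw [Finset.sum_eq_single 0]
  · simp [PowerSeries.coeff_one]
  · intro k _ hk; simp [zero_pow hk]
  · simp

lemma Eg_pow {g : PowerSeries ℝ} (hg0 : PowerSeries.constantCoeff g = 0) (c : ℝ) (m : ℕ) :
    Eg g c ^ m = Eg g (m * c) := by
  induction m with
  | zero => simpa using (Eg_zero g).symm
  | succ m ih =>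
      rw [pow_succ, ih, Eg_mul hg0]
      push_cast
      ring_nf

lemma g_eq {b : ℝ} {g : PowerSeries ℝ} (hg0 : PowerSeries.constantCoeff g = 0)
    (hg : g * Eg g b = PowerSeries.X) : g = PowerSeries.X * Eg g (-b) := by
  rw [← hg, mul_assoc, Eg_mul hg0, add_neg_cancel, Eg_zero, mul_one]

lemma g_pow_eq {b : ℝ} {g : PowerSeries ℝ} (hg0 : PowerSeries.constantCoeff g = 0)
    (hg : g * Eg g b = PowerSeries.X) (m : ℕ) :
    g ^ m = PowerSeries.X ^ m * Eg g (-((m : ℝ) * b)) := by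
  conv_lhs => rw [g_eq hg0 hg]
  rw [mul_pow, Eg_pow hg0, mul_neg]

lemma abel_binom (j : ℕ) (hj : 1 ≤ j) (x y : ℝ) :
    ∑ i ∈ range j, (j.choose (i + 1) : ℝ) * (i + 1) * x ^ (i + 1) * y ^ (j - (i + 1)) =
      (j : ℝ) * x * (x + y) ^ (j - 1) := by
  obtain ⟨J, rfl⟩ : ∃ J, j = J + 1 := ⟨j - 1, by omega⟩
  have key : ∀ i ∈ range (J + 1),
      (((J + 1).choose (i + 1) : ℝ) * (i + 1)) * (x ^ (i + 1) * y ^ (J + 1 - (i + 1)))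
        = ((J + 1 : ℝ) * x) * ((J.choose i : ℝ) * (x ^ i * y ^ (J - i))) := by
    intro i hi
    have h1 : (J + 1) * J.choose i = (J + 1).choose (i + 1) * (i + 1) := by
      simpa using Nat.add_one_mul_choose_eq J i
    have h1' : ((J : ℝ) + 1) * (J.choose i : ℝ) = ((J + 1).choose (i + 1) : ℝ) * ((i : ℝ) + 1) := by
      exact_mod_cast h1
    have h2 : J + 1 - (i + 1) = J - i := by omega
    rw [h2, pow_succ']
    calc ((J + 1).choose (i + 1) : ℝ) * ((i : ℝ) + 1) * (x * x ^ i * y ^ (J - i))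
        = ((J : ℝ) + 1) * (J.choose i : ℝ) * (x * x ^ i * y ^ (J - i)) := by rw [h1']
      _ = ((J + 1 : ℝ) * x) * ((J.choose i : ℝ) * (x ^ i * y ^ (J - i))) := by ring
  calc ∑ i ∈ range (J + 1), ((J + 1).choose (i + 1) : ℝ) * (i + 1) * x ^ (i + 1) * y ^ (J + 1 - (i + 1))
      = ∑ i ∈ range (J + 1), ((J + 1 : ℝ) * x) * ((J.choose i : ℝ) * (x ^ i * y ^ (J - i))) := by
        apply Finset.sum_congr rfl
        intro i hi
        rw [← key i hi]; ring
    _ = ((J + 1 : ℝ) * x) * ∑ i ∈ range (J + 1), x ^ i * y ^ (J - i) * (J.choose i : ℝ) := by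
        rw [Finset.mul_sum]; apply Finset.sum_congr rfl; intro i _; ring
    _ = ((J + 1 : ℝ) * x) * (x + y) ^ J := by rw [← add_pow]
    _ = ((J + 1 : ℕ) : ℝ) * x * (x + y) ^ (J + 1 - 1) := by push_cast; simp

lemma key_coeff {b : ℝ} {g : PowerSeries ℝ} (hg0 : PowerSeries.constantCoeff g = 0)
    (hg : g * Eg g b = PowerSeries.X) :
    ∀ n m : ℕ, 1 ≤ m → m ≤ n →
      PowerSeries.coeff n (g ^ m)
        = (m : ℝ) / (n : ℝ) * (-((n : ℝ) * b)) ^ (n - m) / ((n - m).factorial : ℝ) := by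
  intro n
  induction n using Nat.strong_induction_on with
  | _ n ih =>
    intro m hm1 hmn
    have hn1 : 1 ≤ n := le_trans hm1 hmn
    have hnR : (n : ℝ) ≠ 0 := Nat.cast_ne_zero.2 (by omega)
    have step : PowerSeries.coeff n (g ^ m)
        = ∑ k ∈ range (n - m + 1),
            (-((m : ℝ) * b)) ^ k / (k.factorial : ℝ) * PowerSeries.coeff (n - m) (g ^ k) := by
      rw [g_pow_eq hg0 hg m, PowerSeries.coeff_X_pow_mul', if_pos hmn]
      simp only [Eg, PowerSeries.coeff_mk]
    set j := n - m with hj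
    rcases Nat.eq_zero_or_pos j with hj0 | hjpos
    · -- m = n
      rw [step, hj0]
      have hmn' : m = n := by omega
      simp [hmn', div_self hnR]
    · -- 1 ≤ j
      have hjR : (j : ℝ) ≠ 0 := Nat.cast_ne_zero.2 (by omega)
      have hjn : j < n := by omega
      rw [step, Finset.sum_range_succ']
      have h00 : (-((m : ℝ) * b)) ^ 0 / ((0:ℕ).factorial : ℝ) * PowerSeries.coeff j (g ^ 0)
          = 0 := by
        rw [pow_zero, pow_zero, PowerSeries.coeff_one, if_neg (by omega : ¬ j = 0)]
        simp
      rw [h00, add_zero]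
      have hterm : ∀ i ∈ range j,
          (-((m : ℝ) * b)) ^ (i + 1) / ((i + 1).factorial : ℝ) *
              PowerSeries.coeff j (g ^ (i + 1))
            = (-b) ^ j / ((j : ℝ) * (j.factorial : ℝ)) *
                ((j.choose (i + 1) : ℝ) * ((i : ℕ) + 1 : ℝ) * (m : ℝ) ^ (i + 1) *
                  (j : ℝ) ^ (j - (i + 1))) := by
        intro i hi
        have hij : i + 1 ≤ j := Finset.mem_range.1 hi
        rw [ih j hjn (i + 1) (by omega) hij]
        have h1 : (-((m : ℝ) * b)) ^ (i + 1) = (m : ℝ) ^ (i + 1) * (-b) ^ (i + 1) := by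
          rw [← mul_pow]; ring_nf
        have h2 : (-((j : ℝ) * b)) ^ (j - (i + 1)) = (j : ℝ) ^ (j - (i + 1)) * (-b) ^ (j - (i + 1)) := by
          rw [← mul_pow]; ring_nf
        have h3 : (-b) ^ j = (-b) ^ (i + 1) * (-b) ^ (j - (i + 1)) := by
          rw [← pow_add]; congr 1; omega
        rw [h1, h2, h3, choose_cast_eq j (i + 1) hij]
        have e1 : ((i + 1).factorial : ℝ) ≠ 0 := Nat.cast_ne_zero.2 (Nat.factorial_ne_zero _)
        have e2 : ((j - (i + 1)).factorial : ℝ) ≠ 0 := Nat.cast_ne_zero.2 (Nat.factorial_ne_zero _)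
        have e3 : (j.factorial : ℝ) ≠ 0 := Nat.cast_ne_zero.2 (Nat.factorial_ne_zero _)
        field_simp
        push_cast; ring
      rw [Finset.sum_congr rfl hterm, ← Finset.mul_sum]
      have hsum : ∑ i ∈ range j,
          (j.choose (i + 1) : ℝ) * ((i : ℕ) + 1 : ℝ) * (m : ℝ) ^ (i + 1) * (j : ℝ) ^ (j - (i + 1))
            = (j : ℝ) * (m : ℝ) * ((m : ℝ) + (j : ℝ)) ^ (j - 1) := by
        exact abel_binom j hjpos (m : ℝ) (j : ℝ)
      rw [hsum]
      have hmj : (m : ℝ) + (j : ℝ) = (n : ℝ) := by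
        have : m + j = n := by omega
        exact_mod_cast congrArg (Nat.cast : ℕ → ℝ) this
      rw [hmj]
      have hnb : (-((n : ℝ) * b)) ^ j = (n : ℝ) ^ (j - 1) * (n : ℝ) * (-b) ^ j := by
        have : (-((n : ℝ) * b)) ^ j = (n : ℝ) ^ j * (-b) ^ j := by rw [← mul_pow]; ring_nf
        rw [this]
        congr 1
        rw [← pow_succ]
        congr 1
        omega
      rw [hnb]
      have e3 : (j.factorial : ℝ) ≠ 0 := Nat.cast_ne_zero.2 (Nat.factorial_ne_zero _)
      field_simp

/-- Generating function for the Abel polynomials: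
`Σ_n A_n(x;b) t^n/n! = exp(x g(t))` where `g` is the compositional inverse of
`f(t) = t e^{bt}`, i.e. `g(t) e^{b g(t)} = t`.  Since `g` has zero constant
term, `e^{b g(t)}` is the power series whose `n`-th coefficient is
`Σ_{k≤n} b^k/k! · [t^n] g^k`, and the identity is stated coefficientwise:
the coefficient of `t^n` in `exp(x g(t))` is `Σ_{m≤n} ([t^n] g^m / m!) x^m`. -/
theorem abel_generating_function (b : ℝ) (A : ℕ → Polynomial ℝ)
    (hA0 : A 0 = 1)
    (hA : ∀ n : ℕ, 1 ≤ n → A n = Polynomial.X * (Polynomial.X - Polynomial.C ((n : ℝ) * b)) ^ (n - 1))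
    (g : PowerSeries ℝ)
    (hg0 : PowerSeries.constantCoeff g = 0)
    (hg : g * PowerSeries.mk (fun n =>
        ∑ k ∈ Finset.range (n + 1),
          b ^ k / (k.factorial : ℝ) * PowerSeries.coeff n (g ^ k)) =
      PowerSeries.X) :
    ∀ n : ℕ,
      ((n.factorial : ℝ)⁻¹) • A n =
        ∑ m ∈ Finset.range (n + 1),
          (PowerSeries.coeff n (g ^ m) / (m.factorial : ℝ)) •
            (Polynomial.X ^ m : Polynomial ℝ) := by
  have hg' : g * Eg g b = PowerSeries.X := hg
  intro n
  rcases Nat.eq_zero_or_pos n with rfl | hn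
  · simp [hA0]
  · have hnR : (n : ℝ) ≠ 0 := Nat.cast_ne_zero.2 (by omega)
    rw [hA n hn]
    apply Polynomial.ext
    intro q
    rw [Polynomial.coeff_smul, Polynomial.finset_sum_coeff]
    have rhs_eq : ∑ m ∈ range (n + 1),
        ((PowerSeries.coeff n (g ^ m) / (m.factorial : ℝ)) • (Polynomial.X ^ m : ℝ[X])).coeff q
          = if q ∈ range (n + 1) then PowerSeries.coeff n (g ^ q) / (q.factorial : ℝ) else 0 := by
      rw [← Finset.sum_ite_eq (range (n + 1)) q
        (fun m => PowerSeries.coeff n (g ^ m) / (m.factorial : ℝ))]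
      apply Finset.sum_congr rfl
      intro m _
      rw [Polynomial.coeff_smul, Polynomial.coeff_X_pow, smul_eq_mul, mul_ite, mul_one, mul_zero]
    rw [rhs_eq]
    have hXp : Polynomial.X - Polynomial.C ((n : ℝ) * b) = Polynomial.X + Polynomial.C (-((n : ℝ) * b)) := by
      rw [map_neg, sub_eq_add_neg]
    rw [hXp]
    rcases Nat.eq_zero_or_pos q with rfl | hq
    · rw [Polynomial.mul_coeff_zero, Polynomial.coeff_X_zero, zero_mul, smul_zero]
      rw [if_pos (by simp)]
      rw [pow_zero, PowerSeries.coeff_one, if_neg (by omega : ¬ n = 0)]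
      simp
    · obtain ⟨r, rfl⟩ : ∃ r, q = r + 1 := ⟨q - 1, by omega⟩
      rw [Polynomial.coeff_X_mul, Polynomial.coeff_X_add_C_pow, smul_eq_mul]
      rcases le_or_gt (r + 1) n with hqn | hqn
      · rw [if_pos (by simp; omega)]
        rw [key_coeff hg0 hg' n (r + 1) (by omega) hqn]
        have hrn : r ≤ n - 1 := by omega
        rw [choose_cast_eq (n - 1) r hrn]
        have e1 : n - 1 - r = n - (r + 1) := by omega
        have e2 : (n.factorial : ℝ) = (n : ℝ) * ((n - 1).factorial : ℝ) := by
          have h : n = (n - 1) + 1 := by omega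
          rw [h, Nat.factorial_succ]
          push_cast
          ring
        have e3 : ((r + 1).factorial : ℝ) = ((r : ℝ) + 1) * (r.factorial : ℝ) := by
          rw [Nat.factorial_succ]; push_cast; ring
        rw [e1, e2, e3]
        have f1 : (r.factorial : ℝ) ≠ 0 := Nat.cast_ne_zero.2 (Nat.factorial_ne_zero _)
        have f2 : ((n - (r + 1)).factorial : ℝ) ≠ 0 := Nat.cast_ne_zero.2 (Nat.factorial_ne_zero _)
        have f3 : ((n - 1).factorial : ℝ) ≠ 0 := Nat.cast_ne_zero.2 (Nat.factorial_ne_zero _)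
        have f4 : ((r : ℝ) + 1) ≠ 0 := by positivity
        push_cast
        field_simp
      · rw [if_neg (by simp; omega), Nat.choose_eq_zero_of_lt (by omega : n - 1 < r)]
        simp
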